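/- arXiv:2508.06740 — 2 statements merged into one kernel-verified Lean document; each statement's English description precedes it below -/
import Mathlib

section
/- Let k be a commutative ring and α a composition of n. Then ∏_{j ∈ n_α(CF)} (B_α − j·1) = 0 in k[S_n], where the product ranges over the distinct elements j of the finite set n_α(CF) of knapsack numbers. -/
open scoped Classical

noncomputable section

namespace CardShuffle

/-- The descent set of a permutation of `Fin n`, recorded with 1-based positions:
`i ∈ Des w` iff `1 ≤ i ≤ n-1` and (in 1-based terms) `w(i) > w(i+1)`. -/
def Des {n : ℕ} (w : Equiv.Perm (Fin n)) : Finset ℕ :=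
  (Finset.Ico 1 n).filter fun i =>
    ∃ h : i < n, w ⟨i, h⟩ < w ⟨i - 1, Nat.lt_of_le_of_lt (Nat.sub_le i 1) h⟩

/-- The element `B_I` of the group algebra. -/
def BElt (k : Type*) [CommRing k] (n : ℕ) (I : Finset ℕ) :
    MonoidAlgebra k (Equiv.Perm (Fin n)) :=
  ∑ w ∈ Finset.univ.filter fun w : Equiv.Perm (Fin n) => Des w ⊆ I,
    MonoidAlgebra.of k (Equiv.Perm (Fin n)) w

/-- The element `D_I` of the group algebra. -/
def DElt (k : Type*) [CommRing k] (n : ℕ) (I : Finset ℕ) :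
    MonoidAlgebra k (Equiv.Perm (Fin n)) :=
  ∑ w ∈ Finset.univ.filter fun w : Equiv.Perm (Fin n) => Des w = I,
    MonoidAlgebra.of k (Equiv.Perm (Fin n)) w

/-- The longest element `w₀` (i.e. `i ↦ n+1-i` in 1-based terms) as an element of the
group algebra. -/
def w0elt (k : Type*) [CommRing k] (n : ℕ) : MonoidAlgebra k (Equiv.Perm (Fin n)) :=
  MonoidAlgebra.of k (Equiv.Perm (Fin n)) Fin.revPerm

/-- `gapsInv α = gaps⁻¹(α)`: the set of partial sums `α₁+⋯+α_i` for `1 ≤ i ≤ ℓ(α)-1`,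
a subset of `[n-1] = {1,…,n-1}`. -/
def gapsInv {n : ℕ} (α : Composition n) : Finset ℕ :=
  (Finset.Ico 1 α.length).image α.sizeUpTo

/-- The element `B_α := B_{gaps⁻¹(α)}` for a composition `α` of `n`. -/
def BComp (k : Type*) [CommRing k] {n : ℕ} (α : Composition n) :
    MonoidAlgebra k (Equiv.Perm (Fin n)) :=
  BElt k n (gapsInv α)

/-- The reverse of a composition. -/
def revComp {n : ℕ} (α : Composition n) : Composition n where
  blocks := α.blocks.reverse
  blocks_pos := by intro i h; exact α.blocks_pos (List.mem_reverse.mp h)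
  blocks_sum := by rw [List.sum_reverse]; exact α.blocks_sum

/-- A set composition (face) of `[n]`: an ordered tuple of pairwise disjoint nonempty
subsets of `[n]` whose union is `[n]`. -/
structure SetComp (n : ℕ) where
  blocks : List (Finset (Fin n))
  nonempty : ∀ B ∈ blocks, B.Nonempty
  pairwiseDisjoint : blocks.Pairwise Disjoint
  cover : ∀ x : Fin n, ∃ B ∈ blocks, x ∈ B

namespace SetComp

variable {n : ℕ}

/-- The length (number of blocks) of a set composition. -/
abbrev len (F : SetComp n) : ℕ := F.blocks.length

/-- Containment of faces: `F.le G` (i.e. `F ⊑ G`) iff every block of `F` is a subset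
of some block of `G`. -/
def le (F G : SetComp n) : Prop := ∀ B ∈ F.blocks, ∃ C ∈ G.blocks, B ⊆ C

/-- The type of a set composition, as the list of sizes of its blocks. -/
def typeList (F : SetComp n) : List ℕ := F.blocks.map Finset.card

/-- The product of two set compositions: the list of all nonempty intersections
`F_i ∩ G_j`, in lexicographically increasing order of `(i,j)`. -/
def mul (F G : SetComp n) : SetComp n where
  blocks := ((F.blocks.map fun B => G.blocks.map fun C => B ∩ C).flatten).filter
      fun S => S.Nonempty
  nonempty := by
    intro B hB
    simpa using (List.mem_filter.mp hB).2
  pairwiseDisjoint := by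
    apply List.Pairwise.filter
    rw [List.pairwise_flatten]
    constructor
    · intro l hl
      rw [List.mem_map] at hl
      obtain ⟨B, hB, rfl⟩ := hl
      rw [List.pairwise_map]
      exact G.pairwiseDisjoint.imp fun h =>
        h.mono Finset.inter_subset_right Finset.inter_subset_right
    · rw [List.pairwise_map]
      refine F.pairwiseDisjoint.imp ?_
      intro B B' h x hx y hy
      rw [List.mem_map] at hx hy
      obtain ⟨C, _, rfl⟩ := hx
      obtain ⟨C', _, rfl⟩ := hy
      exact h.mono Finset.inter_subset_left Finset.inter_subset_left
  cover := by
    intro x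
    obtain ⟨B, hB, hxB⟩ := F.cover x
    obtain ⟨C, hC, hxC⟩ := G.cover x
    refine ⟨B ∩ C, ?_, Finset.mem_inter.mpr ⟨hxB, hxC⟩⟩
    rw [List.mem_filter]
    constructor
    · rw [List.mem_flatten]
      exact ⟨_, List.mem_map_of_mem hB, List.mem_map_of_mem hC⟩
    · exact decide_eq_true ⟨x, Finset.mem_inter.mpr ⟨hxB, hxC⟩⟩

/-- The one-block set composition `([n])` (for `n = 0`, the empty set composition). -/
def one (n : ℕ) : SetComp n where
  blocks := if (Finset.univ : Finset (Fin n)).Nonempty then [Finset.univ] else []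
  nonempty := by
    intro B hB
    split at hB
    · rw [List.mem_singleton] at hB; subst hB; assumption
    · simp at hB
  pairwiseDisjoint := by split <;> simp
  cover := by
    intro x
    have h : (Finset.univ : Finset (Fin n)).Nonempty := ⟨x, Finset.mem_univ x⟩
    refine ⟨Finset.univ, ?_, Finset.mem_univ x⟩
    rw [if_pos h]
    exact List.mem_singleton.mpr rfl

end SetComp

/-- The knapsack number `n_α(F)`: the number of faces `G` with `F ⊑ G` and `type G = α`. -/
def knap {n : ℕ} (α : Composition n) (F : SetComp n) : ℕ :=
  Nat.card {G : SetComp n // F.le G ∧ G.typeList = α.blocks}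

/-- The signed knapsack number `ñ_α(F) = (-1)^(n - ℓ(F)) n_α(F)`. -/
def sknap {n : ℕ} (α : Composition n) (F : SetComp n) : ℤ :=
  (-1) ^ (n - F.len) * (knap α F : ℤ)

/-- The number of singleton (size-1) blocks of a set composition. -/
def sinF {n : ℕ} (F : SetComp n) : ℕ :=
  (F.blocks.filter fun B => B.card = 1).length


/-! ### Auxiliary development for Statement 1 -/

section Aux

open Finset

variable {n : ℕ}

/-- No breakpoint of `U` lies in the half-open interval `(p, q]`. -/
def SameB (U : Finset ℕ) (p q : Fin n) : Prop := ∀ s ∈ U, ¬((p : ℕ) < s ∧ s ≤ (q : ℕ))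

/-- `w` is strictly increasing on each block determined by the breakpoint set `U`. -/
def IncS (U : Finset ℕ) (w : Equiv.Perm (Fin n)) : Prop :=
  ∀ p q : Fin n, p < q → SameB U p q → w p < w q

lemma SameB.mono {U V : Finset ℕ} {p q : Fin n} (hUV : U ⊆ V) (h : SameB V p q) :
    SameB U p q := fun s hs => h s (hUV hs)

lemma SameB.sub {U : Finset ℕ} {p q p' q' : Fin n} (hp : (p : ℕ) ≤ (p' : ℕ))
    (hq : (q' : ℕ) ≤ (q : ℕ)) (h : SameB U p q) : SameB U p' q' := by
  intro s hs hc
  exact h s hs ⟨lt_of_le_of_lt hp hc.1, hc.2.trans hq⟩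

lemma sameB_adj {U : Finset ℕ} {s : ℕ} (h1 : 1 ≤ s) (h2 : s < n) (hs : s ∉ U) :
    SameB U ⟨s - 1, by omega⟩ ⟨s, h2⟩ := by
  intro t ht hc
  simp only [] at hc
  have : t = s := by omega
  exact hs (this ▸ ht)

lemma not_sameB_self {U : Finset ℕ} {s : ℕ} (h1 : 1 ≤ s) (h2 : s < n) (hs : s ∈ U) :
    ¬ SameB U ⟨s - 1, by omega⟩ ⟨s, h2⟩ := by
  intro h
  exact h s hs ⟨by simp; omega, by simp⟩

lemma incS_of_adj {U : Finset ℕ} {w : Equiv.Perm (Fin n)}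
    (hadj : ∀ s : ℕ, 1 ≤ s → ∀ h2 : s < n, s ∉ U →
      w ⟨s - 1, by omega⟩ < w ⟨s, h2⟩) : IncS U w := by
  have key : ∀ d : ℕ, ∀ p q : Fin n, (q : ℕ) = (p : ℕ) + d + 1 → SameB U p q → w p < w q := by
    intro d
    induction d with
    | zero =>
      intro p q hq hblk
      have h1 : 1 ≤ (q : ℕ) := by omega
      have hqU : (q : ℕ) ∉ U := fun hmem => hblk _ hmem ⟨by omega, le_refl _⟩
      have hthis := hadj (q : ℕ) h1 q.2 hqU
      have hp : (⟨(q : ℕ) - 1, by omega⟩ : Fin n) = p := by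
        apply Fin.ext; simp; omega
      have hq2 : (⟨(q : ℕ), q.2⟩ : Fin n) = q := by apply Fin.ext; simp
      rwa [hp, hq2] at hthis
    | succ d ih =>
      intro p q hq hblk
      have hq1 : (q : ℕ) - 1 < n := by omega
      have h1 : w p < w ⟨(q : ℕ) - 1, hq1⟩ := by
        refine ih p _ (by simp; omega) (hblk.sub (le_refl _) (by simp))
      have hqU : (q : ℕ) ∉ U := fun hmem => hblk _ hmem ⟨by omega, le_refl _⟩
      have h2 : w ⟨(q : ℕ) - 1, hq1⟩ < w q := by
        have hthis := hadj (q : ℕ) (by omega) q.2 hqU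
        have hq2 : (⟨(q : ℕ), q.2⟩ : Fin n) = q := by apply Fin.ext; simp
        rwa [hq2] at hthis
      exact h1.trans h2
  intro p q hpq hblk
  have hval : (p : ℕ) < (q : ℕ) := hpq
  exact key ((q : ℕ) - (p : ℕ) - 1) p q (by omega) hblk

lemma constS_of_adj {X : Type*} {U : Finset ℕ} {f : Fin n → X}
    (hadj : ∀ s : ℕ, 1 ≤ s → ∀ h2 : s < n, s ∉ U →
      f ⟨s - 1, by omega⟩ = f ⟨s, h2⟩) :
    ∀ p q : Fin n, (p : ℕ) ≤ (q : ℕ) → SameB U p q → f p = f q := by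
  have key : ∀ d : ℕ, ∀ p q : Fin n, (q : ℕ) = (p : ℕ) + d → SameB U p q → f p = f q := by
    intro d
    induction d with
    | zero =>
      intro p q hq _
      have : p = q := by apply Fin.ext; omega
      rw [this]
    | succ d ih =>
      intro p q hq hblk
      have hq1 : (q : ℕ) - 1 < n := by omega
      have h1 : f p = f ⟨(q : ℕ) - 1, hq1⟩ := by
        refine ih p _ (by simp; omega) (hblk.sub (le_refl _) (by simp))
      have hqU : (q : ℕ) ∉ U := fun hmem => hblk _ hmem ⟨by omega, le_refl _⟩
      have h2 : f ⟨(q : ℕ) - 1, hq1⟩ = f q := by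
        have hthis := hadj (q : ℕ) (by omega) q.2 hqU
        have hq2 : (⟨(q : ℕ), q.2⟩ : Fin n) = q := by apply Fin.ext; simp
        rwa [hq2] at hthis
      exact h1.trans h2
  intro p q hpq hblk
  exact key ((q : ℕ) - (p : ℕ)) p q (by omega) hblk

lemma des_subset_iff_incS {U : Finset ℕ} {w : Equiv.Perm (Fin n)} :
    Des w ⊆ U ↔ IncS U w := by
  constructor
  · intro hsub
    apply incS_of_adj
    intro s h1 h2 hsU
    rcases lt_trichotomy (w ⟨s - 1, by omega⟩) (w ⟨s, h2⟩) with h | h | h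
    · exact h
    · exfalso
      have := w.injective h
      have : s - 1 = s := congrArg Fin.val this
      omega
    · exfalso
      apply hsU
      apply hsub
      unfold Des
      rw [Finset.mem_filter, Finset.mem_Ico]
      exact ⟨⟨h1, h2⟩, h2, h⟩
  · intro hinc i hi
    unfold Des at hi
    rw [Finset.mem_filter, Finset.mem_Ico] at hi
    obtain ⟨⟨h1, h2⟩, hlt, hdes⟩ := hi
    by_contra hiU
    have := hinc ⟨i - 1, by omega⟩ ⟨i, hlt⟩ (by simp [Fin.lt_def]; omega)
      (sameB_adj h1 hlt hiU)
    exact absurd hdes (not_lt.mpr this.le)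

/-! ### Composition helpers -/

lemma index_eq_of (c : Composition n) {p : Fin n} {i : Fin c.length}
    (h1 : c.sizeUpTo i ≤ (p : ℕ)) (h2 : (p : ℕ) < c.sizeUpTo ((i : ℕ) + 1)) :
    c.index p = i := by
  have hle := c.sizeUpTo_index_le p
  have hlt := c.lt_sizeUpTo_index_succ p
  rw [Fin.val_succ] at hlt
  rcases lt_trichotomy (c.index p) i with h | h | h
  · exfalso
    have : c.sizeUpTo ((c.index p : ℕ) + 1) ≤ c.sizeUpTo i :=
      c.monotone_sizeUpTo (by exact_mod_cast h)
    omega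
  · exact h
  · exfalso
    have : c.sizeUpTo ((i : ℕ) + 1) ≤ c.sizeUpTo (c.index p) :=
      c.monotone_sizeUpTo (by exact_mod_cast h)
    omega

lemma index_mono (c : Composition n) {p q : Fin n} (h : (p : ℕ) ≤ (q : ℕ)) :
    (c.index p : ℕ) ≤ (c.index q : ℕ) := by
  by_contra hc
  push_neg at hc
  have h1 : c.sizeUpTo ((c.index q : ℕ) + 1) ≤ c.sizeUpTo (c.index p) :=
    c.monotone_sizeUpTo (by omega)
  have h2 := c.sizeUpTo_index_le p
  have h3 := c.lt_sizeUpTo_index_succ q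
  rw [Fin.val_succ] at h3
  omega

lemma lt_of_index_lt (c : Composition n) {p q : Fin n}
    (h : (c.index p : ℕ) < (c.index q : ℕ)) : p < q := by
  rw [Fin.lt_def]
  by_contra hc
  push_neg at hc
  have := index_mono c hc
  omega

lemma sameB_gapsInv_iff (c : Composition n) {p q : Fin n} (hpq : (p : ℕ) ≤ (q : ℕ)) :
    SameB (gapsInv c) p q ↔ c.index p = c.index q := by
  constructor
  · intro hs
    by_contra hne
    have hlt : (c.index p : ℕ) < (c.index q : ℕ) :=
      lt_of_le_of_ne (index_mono c hpq) (fun h => hne (Fin.ext h))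
    have hi : ((c.index p : ℕ) + 1) ∈ Finset.Ico 1 c.length := by
      rw [Finset.mem_Ico]
      have := (c.index q).2
      omega
    have hmem : c.sizeUpTo ((c.index p : ℕ) + 1) ∈ gapsInv c :=
      Finset.mem_image_of_mem _ hi
    apply hs _ hmem
    constructor
    · have := c.lt_sizeUpTo_index_succ p
      rwa [Fin.val_succ] at this
    · refine le_trans (c.monotone_sizeUpTo (by omega)) (c.sizeUpTo_index_le q)
  · intro heq s hs hc
    obtain ⟨i, hi, rfl⟩ := Finset.mem_image.mp hs
    rw [Finset.mem_Ico] at hi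
    have h1 : i ≤ (c.index q : ℕ) := by
      by_contra hgt
      push_neg at hgt
      have hx : c.sizeUpTo ((c.index q : ℕ) + 1) ≤ c.sizeUpTo i := c.monotone_sizeUpTo (by omega)
      have hy := c.lt_sizeUpTo_index_succ q
      rw [Fin.val_succ] at hy
      omega
    have h2 : (c.index p : ℕ) < i := by
      by_contra hge
      push_neg at hge
      have hx : c.sizeUpTo i ≤ c.sizeUpTo (c.index p) := c.monotone_sizeUpTo hge
      have hy := c.sizeUpTo_index_le p
      omega
    have : (c.index p : ℕ) = (c.index q : ℕ) := congrArg Fin.val heq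
    omega

lemma card_index_fiber (c : Composition n) (i : Fin c.length) :
    (univ.filter fun p : Fin n => c.index p = i).card = c.blocksFun i := by
  have himg : (univ.filter fun p : Fin n => c.index p = i)
      = Finset.image (fun j => c.embedding i j) univ := by
    ext p
    simp only [mem_filter, mem_univ, true_and, Finset.mem_image]
    constructor
    · intro h
      obtain ⟨j, hj⟩ := Set.mem_range.mp (c.mem_range_embedding_iff'.mpr h.symm)
      exact ⟨j, hj⟩
    · rintro ⟨j, -, rfl⟩
      exact c.index_embedding i j
  rw [himg, Finset.card_image_of_injective _ (c.embedding i).injective, card_univ,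
    Fintype.card_fin]

lemma gapsInv_subset_Ico (c : Composition n) : gapsInv c ⊆ Finset.Ico 1 n := by
  intro s hs
  obtain ⟨i, hi, rfl⟩ := Finset.mem_image.mp hs
  rw [Finset.mem_Ico] at hi ⊢
  constructor
  · have h1 : c.sizeUpTo 1 ≤ c.sizeUpTo i := c.monotone_sizeUpTo hi.1
    have h2 : 0 < c.sizeUpTo 1 := by
      have h3 : 0 < c.length := by omega
      rw [c.sizeUpTo_succ h3, c.sizeUpTo_zero]
      have := c.blocks_pos' 0 h3
      omega
    omega
  · have h2 : c.sizeUpTo i < c.sizeUpTo (i + 1) := c.sizeUpTo_strict_mono hi.2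
    have h3 : c.sizeUpTo (i + 1) ≤ c.sizeUpTo c.length := c.monotone_sizeUpTo (by omega)
    rw [c.sizeUpTo_length] at h3
    omega

lemma offset_lt (c : Composition n) (x : Fin n) :
    (x : ℕ) - c.sizeUpTo (c.index x) < c.blocksFun (c.index x) := by
  have h1 := c.sizeUpTo_index_le x
  have h2 := c.lt_sizeUpTo_index_succ x
  rw [Fin.val_succ] at h2
  have h3 : c.sizeUpTo ((c.index x : ℕ) + 1) = c.sizeUpTo (c.index x) + c.blocksFun (c.index x) := by
    rw [c.sizeUpTo_succ (c.index x).2]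
    rfl
  omega

end Aux

section Faces

open Finset

variable {n : ℕ}

open Fin.NatCast in
/-- The composition-as-set with boundaries `U ∪ {0, n}`. -/
def casOf (U : Finset ℕ) : CompositionAsSet n where
  boundaries := insert 0 (insert (Fin.last n) (U.image (Nat.cast : ℕ → Fin (n + 1))))
  zero_mem := Finset.mem_insert_self _ _
  getLast_mem := Finset.mem_insert_of_mem (Finset.mem_insert_self _ _)

/-- The composition of `n` whose set of breakpoints is `U`. -/
def compOfBreaks (U : Finset ℕ) : Composition n := (casOf U).toComposition

lemma mem_gapsInv_iff_boundary (c : Composition n) {s : ℕ} (h1 : 1 ≤ s) (h2 : s < n) :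
    s ∈ gapsInv c ↔ (⟨s, by omega⟩ : Fin (n + 1)) ∈ c.boundaries := by
  have hbval : ∀ i : Fin (c.length + 1), ((c.boundary i : Fin (n+1)) : ℕ) = c.sizeUpTo i := by
    intro i; rfl
  constructor
  · intro hs
    obtain ⟨i, hi, rfl⟩ := Finset.mem_image.mp hs
    rw [Finset.mem_Ico] at hi
    rw [Composition.boundaries, Finset.mem_map]
    refine ⟨⟨i, by omega⟩, Finset.mem_univ _, ?_⟩
    apply Fin.ext
    exact hbval _
  · intro hs
    rw [Composition.boundaries, Finset.mem_map] at hs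
    obtain ⟨i, -, hi⟩ := hs
    have hival : c.sizeUpTo i = s := by
      have h' : ((c.boundary i : Fin (n+1)) : ℕ) = s := by
        rw [show (c.boundary i : Fin (n+1)) = ⟨s, by omega⟩ from hi]
      rw [hbval i] at h'
      exact h'
    have hne0 : (i : ℕ) ≠ 0 := by
      intro h
      rw [h, c.sizeUpTo_zero] at hival
      omega
    have hnel : (i : ℕ) ≠ c.length := by
      intro h
      rw [h, c.sizeUpTo_length] at hival
      omega
    have hilt : (i : ℕ) < c.length + 1 := i.2
    exact Finset.mem_image.mpr ⟨(i : ℕ), Finset.mem_Ico.mpr ⟨by omega, by omega⟩, hival⟩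

open Fin.NatCast in
lemma gapsInv_compOfBreaks {U : Finset ℕ} (hU : U ⊆ Finset.Ico 1 n) :
    gapsInv (compOfBreaks U : Composition n) = U := by
  ext s
  constructor
  · intro hs
    have hIco := Finset.mem_Ico.mp (gapsInv_subset_Ico _ hs)
    rw [mem_gapsInv_iff_boundary _ hIco.1 hIco.2] at hs
    rw [compOfBreaks, CompositionAsSet.toComposition_boundaries] at hs
    simp only [casOf, Finset.mem_insert, Finset.mem_image] at hs
    rcases hs with h0 | hlast | ⟨t, ht, hcast⟩
    · exfalso
      have : s = 0 := by
        have := congrArg Fin.val h0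
        simpa using this
      omega
    · exfalso
      have : s = n := by
        have := congrArg Fin.val hlast
        simpa [Fin.last] using this
      omega
    · have htIco := Finset.mem_Ico.mp (hU ht)
      have : t = s := by
        have := congrArg Fin.val hcast
        rwa [Fin.val_cast_of_lt (by omega)] at this
      exact this ▸ ht
  · intro hs
    have hIco := Finset.mem_Ico.mp (hU hs)
    rw [mem_gapsInv_iff_boundary _ hIco.1 hIco.2, compOfBreaks,
      CompositionAsSet.toComposition_boundaries]
    refine Finset.mem_insert_of_mem (Finset.mem_insert_of_mem (Finset.mem_image.mpr ⟨s, hs, ?_⟩))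
    apply Fin.ext
    rw [Fin.val_cast_of_lt (by omega)]

/-- The face of `[n]` whose blocks are the blocks of a composition, in order. -/
def faceOf (c : Composition n) : SetComp n where
  blocks := (List.finRange c.length).map fun l => univ.filter fun p : Fin n => c.index p = l
  nonempty := by
    intro B hB
    rw [List.mem_map] at hB
    obtain ⟨l, -, rfl⟩ := hB
    have hlt : c.sizeUpTo l < n := by
      have h1 : c.sizeUpTo ((l : ℕ) + 1) ≤ c.sizeUpTo c.length := c.monotone_sizeUpTo l.2
      have h2 := c.sizeUpTo_strict_mono l.2
      rw [c.sizeUpTo_length] at h1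
      omega
    refine ⟨⟨c.sizeUpTo l, hlt⟩, ?_⟩
    rw [Finset.mem_filter]
    exact ⟨Finset.mem_univ _, index_eq_of c (le_refl _) (c.sizeUpTo_strict_mono l.2)⟩
  pairwiseDisjoint := by
    rw [List.pairwise_map]
    refine List.Pairwise.imp ?_ (List.nodup_finRange c.length)
    intro l l' hne
    rw [Finset.disjoint_left]
    intro p hp hp'
    rw [Finset.mem_filter] at hp hp'
    exact hne (hp.2.symm.trans hp'.2)
  cover := by
    intro p
    refine ⟨univ.filter fun q : Fin n => c.index q = c.index p, ?_, ?_⟩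
    · rw [List.mem_map]
      exact ⟨c.index p, List.mem_finRange _, rfl⟩
    · rw [Finset.mem_filter]
      exact ⟨Finset.mem_univ _, rfl⟩

lemma faceOf_sameBlock (c : Composition n) (p q : Fin n) :
    (∃ B ∈ (faceOf c).blocks, p ∈ B ∧ q ∈ B) ↔ c.index p = c.index q := by
  constructor
  · rintro ⟨B, hB, hp, hq⟩
    have : B ∈ (List.finRange c.length).map
        fun l => univ.filter fun r : Fin n => c.index r = l := hB
    rw [List.mem_map] at this
    obtain ⟨l, -, rfl⟩ := this
    rw [Finset.mem_filter] at hp hq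
    exact hp.2.trans hq.2.symm
  · intro h
    refine ⟨univ.filter fun r : Fin n => c.index r = c.index q, ?_, ?_, ?_⟩
    · show _ ∈ (List.finRange c.length).map fun l => univ.filter fun r : Fin n => c.index r = l
      rw [List.mem_map]
      exact ⟨c.index q, List.mem_finRange _, rfl⟩
    · rw [Finset.mem_filter]; exact ⟨Finset.mem_univ _, h⟩
    · rw [Finset.mem_filter]; exact ⟨Finset.mem_univ _, rfl⟩

/-- The set of admissible assignment functions: constant on the blocks of `U`, with fibers of
snames given by `α`. -/
def phiSet (α : Composition n) (U : Finset ℕ) : Finset (Fin n → Fin α.length) :=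
  univ.filter fun φ => (∀ p q : Fin n, (p : ℕ) ≤ (q : ℕ) → SameB U p q → φ p = φ q) ∧
    ∀ j, (univ.filter fun p => φ p = j).card = α.blocksFun j

/-- The knapsack number attached to a breakpoint set. -/
def nvalT (α : Composition n) (U : Finset ℕ) : ℕ := (phiSet α U).card

lemma SetComp.ext' {F G : SetComp n} (h : F.blocks = G.blocks) : F = G := by
  cases F; cases G
  simpa using h

end Faces

section Knap

open Finset

variable {n : ℕ}

lemma block_exists_unique (G : SetComp n) (p : Fin n) :
    ∃! j : Fin G.blocks.length, p ∈ G.blocks.get j := by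
  obtain ⟨B, hB, hpB⟩ := G.cover p
  obtain ⟨j, hj⟩ := List.mem_iff_get.mp hB
  have hpj : p ∈ G.blocks.get j := by rw [hj]; exact hpB
  refine ⟨j, hpj, ?_⟩
  intro j' hj'
  by_contra hne
  have hpd := List.pairwise_iff_get.mp G.pairwiseDisjoint
  rcases lt_or_gt_of_ne hne with h | h
  · exact Finset.disjoint_left.mp (hpd _ _ h) hj' hpj
  · exact Finset.disjoint_left.mp (hpd _ _ h) hpj hj'

/-- The index of the block of `G` containing `p`. -/
def blockIdx (G : SetComp n) (p : Fin n) : Fin G.blocks.length :=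
  Fintype.choose _ (block_exists_unique G p)

lemma blockIdx_spec (G : SetComp n) (p : Fin n) : p ∈ G.blocks.get (blockIdx G p) :=
  Fintype.choose_spec _ (block_exists_unique G p)

lemma blockIdx_eq (G : SetComp n) {p : Fin n} {j : Fin G.blocks.length}
    (h : p ∈ G.blocks.get j) : blockIdx G p = j :=
  (block_exists_unique G p).unique (blockIdx_spec G p) h

/-- The face whose blocks are the fibers of a function with prescribed fiber sizes. -/
def facePhi (α : Composition n) (φ : Fin n → Fin α.length)
    (hfib : ∀ j, (univ.filter fun p => φ p = j).card = α.blocksFun j) : SetComp n where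
  blocks := (List.finRange α.length).map fun j => univ.filter fun p : Fin n => φ p = j
  nonempty := by
    intro B hB
    rw [List.mem_map] at hB
    obtain ⟨j, -, rfl⟩ := hB
    rw [← Finset.card_pos, hfib j]
    exact α.one_le_blocksFun j
  pairwiseDisjoint := by
    rw [List.pairwise_map]
    refine List.Pairwise.imp ?_ (List.nodup_finRange α.length)
    intro l l' hne
    rw [Finset.disjoint_left]
    intro p hp hp'
    rw [Finset.mem_filter] at hp hp'
    exact hne (hp.2.symm.trans hp'.2)
  cover := by
    intro p
    refine ⟨univ.filter fun q : Fin n => φ q = φ p, ?_, ?_⟩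
    · rw [List.mem_map]
      exact ⟨φ p, List.mem_finRange _, rfl⟩
    · rw [Finset.mem_filter]
      exact ⟨Finset.mem_univ _, rfl⟩

lemma knap_faceOf (α : Composition n) (c : Composition n) :
    knap α (faceOf c) = (univ.filter fun φ : Fin n → Fin α.length =>
        (∀ p q : Fin n, c.index p = c.index q → φ p = φ q) ∧
        ∀ j, (univ.filter fun p => φ p = j).card = α.blocksFun j).card := by
  classical
  have keyEquiv : {G : SetComp n // (faceOf c).le G ∧ G.typeList = α.blocks} ≃
      {φ : Fin n → Fin α.length //
        (∀ p q : Fin n, c.index p = c.index q → φ p = φ q) ∧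
        ∀ j, (univ.filter fun p => φ p = j).card = α.blocksFun j} := by
    -- length identification for a G satisfying the type condition
    have hlen : ∀ G : SetComp n, G.typeList = α.blocks → G.blocks.length = α.length := by
      intro G htype
      have h1 := congrArg List.length htype
      rw [SetComp.typeList, List.length_map] at h1
      rw [h1, Composition.blocks_length]
    -- fiber description of φ built from G
    have fiber_eq : ∀ (G : SetComp n) (htype : G.typeList = α.blocks) (j : Fin α.length),
        (univ.filter fun p => Fin.cast (hlen G htype) (blockIdx G p) = j)
          = G.blocks.get (Fin.cast (hlen G htype).symm j) := by
      intro G htype j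
      ext p
      rw [Finset.mem_filter]
      constructor
      · rintro ⟨-, h⟩
        have : blockIdx G p = Fin.cast (hlen G htype).symm j := by
          apply Fin.val_injective
          rw [Fin.coe_cast]
          have hval := congrArg Fin.val h
          rwa [Fin.coe_cast] at hval
        rw [← this]
        exact blockIdx_spec G p
      · intro h
        refine ⟨Finset.mem_univ _, ?_⟩
        rw [blockIdx_eq G h]
        apply Fin.ext
        rfl
    have card_get : ∀ (G : SetComp n) (htype : G.typeList = α.blocks) (j : Fin α.length),
        (G.blocks.get (Fin.cast (hlen G htype).symm j)).card = α.blocksFun j := by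
      intro G htype j
      have hj : (j : ℕ) < (G.blocks.map Finset.card).length := by
        rw [List.length_map, hlen G htype]
        exact j.2
      have h1 : (G.blocks.map Finset.card)[(j : ℕ)] = α.blocks[(j : ℕ)]'(by
          rw [Composition.blocks_length]; exact j.2) := by
        exact List.getElem_of_eq htype _
      rw [List.getElem_map] at h1
      rw [List.get_eq_getElem]
      exact h1
    refine ⟨fun G => ⟨fun p => Fin.cast (hlen G.1 G.2.2) (blockIdx G.1 p), ?_, ?_⟩,
      fun φ => ⟨facePhi α φ.1 φ.2.2, ?_, ?_⟩, ?_, ?_⟩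
    · -- constancy on blocks of faceOf c
      intro p q hpq
      obtain ⟨C, hC, hsub⟩ := G.2.1 (univ.filter fun r : Fin n => c.index r = c.index q)
        (by
          show _ ∈ (List.finRange c.length).map fun l => univ.filter fun r : Fin n => c.index r = l
          rw [List.mem_map]
          exact ⟨c.index q, List.mem_finRange _, rfl⟩)
      obtain ⟨j0, hj0⟩ := List.mem_iff_get.mp hC
      have hp : p ∈ G.1.blocks.get j0 := by
        rw [hj0]; exact hsub (by rw [Finset.mem_filter]; exact ⟨Finset.mem_univ _, hpq⟩)
      have hq : q ∈ G.1.blocks.get j0 := by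
        rw [hj0]; exact hsub (by rw [Finset.mem_filter]; exact ⟨Finset.mem_univ _, rfl⟩)
      show Fin.cast (hlen G.1 G.2.2) (blockIdx G.1 p) = Fin.cast (hlen G.1 G.2.2) (blockIdx G.1 q)
      rw [blockIdx_eq G.1 hp, blockIdx_eq G.1 hq]
    · -- fiber cardinalities
      intro j
      show (univ.filter fun p => Fin.cast (hlen G.1 G.2.2) (blockIdx G.1 p) = j).card
        = α.blocksFun j
      rw [fiber_eq G.1 G.2.2 j, card_get G.1 G.2.2 j]
    · -- le for facePhi
      intro B hB
      obtain ⟨p₀, hp₀⟩ := (faceOf c).nonempty B hB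
      refine ⟨univ.filter fun q : Fin n => φ.1 q = φ.1 p₀, ?_, ?_⟩
      · show _ ∈ (List.finRange α.length).map fun j => univ.filter fun p : Fin n => φ.1 p = j
        rw [List.mem_map]
        exact ⟨φ.1 p₀, List.mem_finRange _, rfl⟩
      · intro q hq
        rw [Finset.mem_filter]
        refine ⟨Finset.mem_univ _, ?_⟩
        have hidx : c.index q = c.index p₀ := by
          rw [← faceOf_sameBlock c]
          exact ⟨B, hB, hq, hp₀⟩
        exact φ.2.1 q p₀ hidx
    · -- typeList for facePhi
      show ((List.finRange α.length).map fun j =>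
        univ.filter fun p : Fin n => φ.1 p = j).map Finset.card = α.blocks
      apply List.ext_getElem
      · rw [List.length_map, List.length_map, List.length_finRange, Composition.blocks_length]
      · intro i h1 h2
        simp only [List.getElem_map, List.getElem_finRange, Fin.cast_mk]
        have h1' : i < α.length := by simpa using h1
        exact φ.2.2 ⟨i, h1'⟩
    · -- left inverse
      intro G
      apply Subtype.ext
      apply SetComp.ext'
      show ((List.finRange α.length).map fun j =>
        univ.filter fun p : Fin n => Fin.cast (hlen G.1 G.2.2) (blockIdx G.1 p) = j)
        = G.1.blocks
      apply List.ext_getElem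
      · rw [List.length_map, List.length_finRange, hlen G.1 G.2.2]
      · intro i h1 h2
        simp only [List.getElem_map, List.getElem_finRange, Fin.cast_mk]
        have h1' : i < α.length := by simpa using h1
        have := fiber_eq G.1 G.2.2 ⟨i, h1'⟩
        rw [this, List.get_eq_getElem]
        simp only [Fin.coe_cast]
    · -- right inverse
      intro φ
      apply Subtype.ext
      funext p
      apply Fin.val_injective
      simp only [Fin.coe_cast]
      have hlenF : (facePhi α φ.1 φ.2.2).blocks.length = α.length := by
        show ((List.finRange α.length).map _).length = α.length
        rw [List.length_map, List.length_finRange]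
      have hj : blockIdx (facePhi α φ.1 φ.2.2) p
          = ⟨(φ.1 p : ℕ), by rw [hlenF]; exact (φ.1 p).2⟩ := by
        apply blockIdx_eq
        show p ∈ ((List.finRange α.length).map fun j =>
          univ.filter fun q : Fin n => φ.1 q = j)[(φ.1 p : ℕ)]'(by simp)
        rw [List.getElem_map, List.getElem_finRange]
        rw [Finset.mem_filter]
        refine ⟨Finset.mem_univ _, ?_⟩
        apply Fin.ext
        rfl
      rw [hj]
  rw [knap, Nat.card_congr keyEquiv, Nat.card_eq_fintype_card, Fintype.card_subtype]

lemma knap_eq_nvalT (α : Composition n) {U : Finset ℕ} (hU : U ⊆ Finset.Ico 1 n) :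
    knap α (faceOf (compOfBreaks U : Composition n)) = nvalT α U := by
  rw [knap_faceOf, nvalT, phiSet]
  congr 1
  apply Finset.filter_congr
  intro φ _
  constructor
  · rintro ⟨hconst, hfib⟩
    refine ⟨?_, hfib⟩
    intro p q hpq hsb
    apply hconst
    rw [← sameB_gapsInv_iff (compOfBreaks U) hpq, gapsInv_compOfBreaks hU]
    exact hsb
  · rintro ⟨hconst, hfib⟩
    refine ⟨?_, hfib⟩
    intro p q hidx
    rcases le_total (p : ℕ) (q : ℕ) with h | h
    · refine hconst p q h ?_
      rw [← gapsInv_compOfBreaks hU]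
      exact (sameB_gapsInv_iff (compOfBreaks U) h).mpr hidx
    · refine (hconst q p h ?_).symm
      rw [← gapsInv_compOfBreaks hU]
      exact (sameB_gapsInv_iff (compOfBreaks U) h).mpr hidx.symm

end Knap

section UCon

open Finset

variable {n : ℕ} {α : Composition n}

/-- Target blocks for the reconstructed permutation. -/
def Wset (α : Composition n) (φ : Fin n → Fin α.length) (w : Equiv.Perm (Fin n))
    (j : Fin α.length) : Finset (Fin n) :=
  (univ.filter fun p => φ p = j).image w

lemma Wset_card {φ : Fin n → Fin α.length} {w : Equiv.Perm (Fin n)}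
    (hφ : ∀ j, (univ.filter fun p => φ p = j).card = α.blocksFun j) (j : Fin α.length) :
    (Wset α φ w j).card = α.blocksFun j := by
  rw [Wset, Finset.card_image_of_injective _ w.injective, hφ]

lemma Wset_disjoint {φ : Fin n → Fin α.length} {w : Equiv.Perm (Fin n)}
    {j j' : Fin α.length} (h : j ≠ j') : Disjoint (Wset α φ w j) (Wset α φ w j') := by
  rw [Finset.disjoint_left]
  intro x hx hx'
  obtain ⟨p, hp, hpx⟩ := Finset.mem_image.mp hx
  obtain ⟨p', hp', hpx'⟩ := Finset.mem_image.mp hx'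
  rw [Finset.mem_filter] at hp hp'
  have hpp : p = p' := w.injective (hpx.trans hpx'.symm)
  exact h (hp.2.symm.trans (hpp ▸ hp'.2))

/-- The underlying function of the reconstructed permutation. -/
def uConFun (α : Composition n) (φ : Fin n → Fin α.length) (w : Equiv.Perm (Fin n))
    (hφ : ∀ j, (univ.filter fun p => φ p = j).card = α.blocksFun j) : Fin n → Fin n :=
  fun x => (Wset α φ w (α.index x)).orderEmbOfFin (Wset_card hφ _)
    ⟨(x : ℕ) - α.sizeUpTo (α.index x), offset_lt α x⟩

lemma uConFun_mem {φ : Fin n → Fin α.length} {w : Equiv.Perm (Fin n)}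
    (hφ : ∀ j, (univ.filter fun p => φ p = j).card = α.blocksFun j) (x : Fin n) :
    uConFun α φ w hφ x ∈ Wset α φ w (α.index x) :=
  Finset.orderEmbOfFin_mem _ _ _

lemma orderEmbOfFin_lt_orderEmbOfFin {β : Type*} [LinearOrder β] {s t : Finset β} (hst : s = t)
    {k k' : ℕ} {hs : s.card = k} {ht : t.card = k'} {a : Fin k} {b : Fin k'}
    (hab : (a : ℕ) < (b : ℕ)) : s.orderEmbOfFin hs a < t.orderEmbOfFin ht b := by
  subst hst
  have hkk : k = k' := hs.symm.trans ht
  subst hkk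
  exact (s.orderEmbOfFin hs).strictMono (show a < b from hab)

lemma orderEmbOfFin_congr {β : Type*} [LinearOrder β] {s t : Finset β} (hst : s = t)
    {k k' : ℕ} {hs : s.card = k} {ht : t.card = k'} {a : Fin k} {b : Fin k'}
    (hab : (a : ℕ) = (b : ℕ)) : s.orderEmbOfFin hs a = t.orderEmbOfFin ht b := by
  subst hst
  have hkk : k = k' := hs.symm.trans ht
  subst hkk
  have hab' : a = b := Fin.val_injective hab
  subst hab'
  rfl

lemma uConFun_strict {φ : Fin n → Fin α.length} {w : Equiv.Perm (Fin n)}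
    (hφ : ∀ j, (univ.filter fun p => φ p = j).card = α.blocksFun j) {x y : Fin n}
    (hxy : x < y) (hidx : α.index x = α.index y) :
    uConFun α φ w hφ x < uConFun α φ w hφ y := by
  have hle := α.sizeUpTo_index_le x
  have hle2 := α.sizeUpTo_index_le y
  have hlt : (x : ℕ) < (y : ℕ) := hxy
  have hv : (α.index x : ℕ) = (α.index y : ℕ) := congrArg Fin.val hidx
  unfold uConFun
  apply orderEmbOfFin_lt_orderEmbOfFin (congrArg (Wset α φ w) hidx)
  show (x : ℕ) - α.sizeUpTo (α.index x) < (y : ℕ) - α.sizeUpTo (α.index y)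
  have hs : α.sizeUpTo (α.index x) = α.sizeUpTo (α.index y) := by rw [hv]
  omega

lemma uConFun_inj {φ : Fin n → Fin α.length} {w : Equiv.Perm (Fin n)}
    (hφ : ∀ j, (univ.filter fun p => φ p = j).card = α.blocksFun j) :
    Function.Injective (uConFun α φ w hφ) := by
  intro x y hxy
  by_cases hidx : α.index x = α.index y
  · rcases lt_trichotomy x y with h | h | h
    · exact absurd hxy (ne_of_lt (uConFun_strict hφ h hidx))
    · exact h
    · exact absurd hxy.symm (ne_of_lt (uConFun_strict hφ h hidx.symm))
  · exfalso
    have h1 := uConFun_mem (w := w) hφ x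
    have h2 := uConFun_mem (w := w) hφ y
    rw [← hxy] at h2
    exact Finset.disjoint_left.mp (Wset_disjoint hidx) h1 h2

/-- The reconstructed permutation `u`. -/
def uCon (α : Composition n) (φ : Fin n → Fin α.length) (w : Equiv.Perm (Fin n))
    (hφ : ∀ j, (univ.filter fun p => φ p = j).card = α.blocksFun j) : Equiv.Perm (Fin n) :=
  Equiv.ofBijective (uConFun α φ w hφ)
    (Finite.injective_iff_bijective.mp (uConFun_inj hφ))

lemma uCon_apply {φ : Fin n → Fin α.length} {w : Equiv.Perm (Fin n)}
    (hφ : ∀ j, (univ.filter fun p => φ p = j).card = α.blocksFun j) (x : Fin n) :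
    uCon α φ w hφ x = uConFun α φ w hφ x := rfl

lemma uCon_incS {φ : Fin n → Fin α.length} {w : Equiv.Perm (Fin n)}
    (hφ : ∀ j, (univ.filter fun p => φ p = j).card = α.blocksFun j) :
    IncS (gapsInv α) (uCon α φ w hφ) := by
  intro p q hpq hblk
  have hidx : α.index p = α.index q := (sameB_gapsInv_iff α (le_of_lt hpq)).mp hblk
  exact uConFun_strict hφ hpq hidx

lemma uCon_index_eq {φ : Fin n → Fin α.length} {w : Equiv.Perm (Fin n)}
    (hφ : ∀ j, (univ.filter fun p => φ p = j).card = α.blocksFun j) {x : Fin n}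
    {j : Fin α.length} (h : uCon α φ w hφ x ∈ Wset α φ w j) : α.index x = j := by
  by_contra hne
  exact Finset.disjoint_left.mp (Wset_disjoint hne) (uConFun_mem hφ x) h

lemma uCon_symm_index {φ : Fin n → Fin α.length} {w : Equiv.Perm (Fin n)}
    (hφ : ∀ j, (univ.filter fun p => φ p = j).card = α.blocksFun j) {y : Fin n}
    {j : Fin α.length} (h : y ∈ Wset α φ w j) :
    α.index ((uCon α φ w hφ).symm y) = j := by
  apply uCon_index_eq hφ (x := (uCon α φ w hφ).symm y)
  rwa [Equiv.apply_symm_apply]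

lemma uCon_symm_mono {φ : Fin n → Fin α.length} {w : Equiv.Perm (Fin n)}
    (hφ : ∀ j, (univ.filter fun p => φ p = j).card = α.blocksFun j) {y y' : Fin n}
    {j : Fin α.length} (hy : y ∈ Wset α φ w j) (hy' : y' ∈ Wset α φ w j) (h : y < y') :
    (uCon α φ w hφ).symm y < (uCon α φ w hφ).symm y' := by
  set x := (uCon α φ w hφ).symm y with hx
  set x' := (uCon α φ w hφ).symm y' with hx'
  have hjx : α.index x = j := uCon_symm_index hφ hy
  have hjx' : α.index x' = j := uCon_symm_index hφ hy'
  rcases lt_trichotomy x x' with hlt | heq | hgt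
  · exact hlt
  · exfalso
    have : y = y' := by
      have h1 : uCon α φ w hφ x = y := by rw [hx, Equiv.apply_symm_apply]
      have h2 : uCon α φ w hφ x' = y' := by rw [hx', Equiv.apply_symm_apply]
      rw [← h1, ← h2, heq]
    exact absurd this (ne_of_lt h)
  · exfalso
    have := uConFun_strict (w := w) hφ hgt (hjx'.trans hjx.symm)
    have h1 : uCon α φ w hφ x = y := by rw [hx, Equiv.apply_symm_apply]
    have h2 : uCon α φ w hφ x' = y' := by rw [hx', Equiv.apply_symm_apply]
    rw [← uCon_apply hφ, ← uCon_apply hφ, h1, h2] at this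
    exact absurd h (not_lt.mpr this.le)

/-- Canonical description of any block-increasing permutation via `orderEmbOfFin`. -/
lemma u_canonical (u : Equiv.Perm (Fin n)) (hu : IncS (gapsInv α) u) (j : Fin α.length)
    (hcard : ((univ.filter fun y : Fin n => α.index y = j).image u).card = α.blocksFun j) :
    ∀ k : Fin (α.blocksFun j),
      u (α.embedding j k)
        = ((univ.filter fun y : Fin n => α.index y = j).image u).orderEmbOfFin hcard k := by
  have hmem : ∀ k : Fin (α.blocksFun j),
      (fun k : Fin (α.blocksFun j) => u (α.embedding j k)) k
        ∈ (univ.filter fun y : Fin n => α.index y = j).image u := by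
    intro k
    apply Finset.mem_image_of_mem
    rw [Finset.mem_filter]
    exact ⟨Finset.mem_univ _, α.index_embedding j k⟩
  have hmono : StrictMono (fun k : Fin (α.blocksFun j) => u (α.embedding j k)) := by
    intro k k' hk
    have hpq : α.embedding j k < α.embedding j k' := (α.embedding j).strictMono hk
    have hidx : α.index (α.embedding j k) = α.index (α.embedding j k') := by
      rw [α.index_embedding, α.index_embedding]
    exact hu _ _ hpq ((sameB_gapsInv_iff α (le_of_lt hpq)).mpr hidx)
  have := Finset.orderEmbOfFin_unique hcard hmem hmono
  intro k
  exact congrFun this k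

/-- Any block-increasing permutation is determined by the images of the blocks. -/
lemma u_determined (u u' : Equiv.Perm (Fin n)) (hu : IncS (gapsInv α) u)
    (hu' : IncS (gapsInv α) u')
    (him : ∀ j, (univ.filter fun y : Fin n => α.index y = j).image u
      = (univ.filter fun y : Fin n => α.index y = j).image u') : u = u' := by
  apply Equiv.ext
  intro x
  have hcard : ∀ j, ((univ.filter fun y : Fin n => α.index y = j).image u).card
      = α.blocksFun j := by
    intro j
    rw [Finset.card_image_of_injective _ u.injective, card_index_fiber]
  have hcard' : ((univ.filter fun y : Fin n => α.index y = (α.index x)).image u').card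
      = α.blocksFun (α.index x) := by
    rw [Finset.card_image_of_injective _ u'.injective, card_index_fiber]
  have h1 := u_canonical u hu (α.index x) (hcard (α.index x)) (α.invEmbedding x)
  have h2 := u_canonical u' hu' (α.index x) hcard' (α.invEmbedding x)
  rw [α.embedding_comp_inv x] at h1 h2
  rw [h1, h2]
  exact orderEmbOfFin_congr (him (α.index x)) rfl

end UCon

section Expand

open Finset

variable {n : ℕ} {α : Composition n}

/-- The column map of `v`. -/
def fwdPhi (α : Composition n) (v : Equiv.Perm (Fin n)) : Fin n → Fin α.length :=
  fun p => α.index (v p)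

/-- The refined breakpoint set determined by `v`. -/
def fwdT (α : Composition n) (U : Finset ℕ) (v : Equiv.Perm (Fin n)) : Finset ℕ :=
  U ∪ (Finset.Ico 1 n).filter fun s => ∃ h : s < n,
    fwdPhi α v ⟨s, h⟩ ≠ fwdPhi α v ⟨s - 1, Nat.lt_of_le_of_lt (Nat.sub_le s 1) h⟩

/-- Validity of an index pair. -/
def ValidPair (α : Composition n) (U : Finset ℕ) (x : Finset ℕ × (Fin n → Fin α.length)) :
    Prop :=
  U ⊆ x.1 ∧
  (∀ p q : Fin n, (p : ℕ) ≤ (q : ℕ) → SameB x.1 p q → x.2 p = x.2 q) ∧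
  (∀ p q : Fin n, p < q → SameB U p q → ¬ SameB x.1 p q → x.2 p < x.2 q) ∧
  (∀ j, (univ.filter fun p => x.2 p = j).card = α.blocksFun j)

lemma fwdPhi_fibers (v : Equiv.Perm (Fin n)) (j : Fin α.length) :
    (univ.filter fun p => fwdPhi α v p = j).card = α.blocksFun j := by
  have himg : (univ.filter fun p => fwdPhi α v p = j)
      = (univ.filter fun y : Fin n => α.index y = j).image v.symm := by
    ext p
    simp only [mem_filter, mem_univ, true_and, Finset.mem_image]
    constructor
    · intro h
      exact ⟨v p, h, v.symm_apply_apply p⟩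
    · rintro ⟨y, hy, rfl⟩
      show α.index (v (v.symm y)) = j
      rwa [v.apply_symm_apply]
  rw [himg, Finset.card_image_of_injective _ v.symm.injective, card_index_fiber]

lemma fwdT_subset (U : Finset ℕ) (hU : U ⊆ Finset.Ico 1 n) (v : Equiv.Perm (Fin n)) :
    fwdT α U v ⊆ Finset.Ico 1 n :=
  Finset.union_subset hU (Finset.filter_subset _ _)

lemma subset_fwdT (U : Finset ℕ) (v : Equiv.Perm (Fin n)) : U ⊆ fwdT α U v :=
  Finset.subset_union_left

lemma fwdPhi_const (U : Finset ℕ) (v : Equiv.Perm (Fin n)) :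
    ∀ p q : Fin n, (p : ℕ) ≤ (q : ℕ) → SameB (fwdT α U v) p q →
      fwdPhi α v p = fwdPhi α v q := by
  apply constS_of_adj
  intro s h1 h2 hs
  rw [fwdT, Finset.mem_union, Finset.mem_filter, Finset.mem_Ico] at hs
  push_neg at hs
  have h3 := hs.2 ⟨h1, h2⟩ h2
  exact h3.symm

lemma fwdPhi_mono (U : Finset ℕ) (v : Equiv.Perm (Fin n)) (hv : IncS U v) :
    ∀ p q : Fin n, (p : ℕ) ≤ (q : ℕ) → SameB U p q →
      (fwdPhi α v p : ℕ) ≤ (fwdPhi α v q : ℕ) := by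
  intro p q hpq hblk
  rcases eq_or_lt_of_le hpq with h | h
  · have : p = q := Fin.val_injective h
    rw [this]
  · exact index_mono α (le_of_lt (hv p q h hblk))

lemma fwdPhi_strict (U : Finset ℕ) (v : Equiv.Perm (Fin n)) (hv : IncS U v) :
    ∀ p q : Fin n, p < q → SameB U p q → ¬ SameB (fwdT α U v) p q →
      fwdPhi α v p < fwdPhi α v q := by
  intro p q hpq hblk hnblk
  unfold SameB at hnblk
  push_neg at hnblk
  obtain ⟨s, hsT, hps, hsq⟩ := hnblk
  have hsU : s ∉ U := fun hmem => hblk s hmem ⟨hps, hsq⟩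
  rw [fwdT, Finset.mem_union] at hsT
  rcases hsT with h | h
  · exact absurd h hsU
  · rw [Finset.mem_filter, Finset.mem_Ico] at h
    obtain ⟨⟨h1, h2⟩, hlt, hjump⟩ := h
    -- p ≤ s-1 < s ≤ q
    have hps1 : (p : ℕ) ≤ s - 1 := by omega
    have hm1 : (fwdPhi α v p : ℕ) ≤ (fwdPhi α v ⟨s - 1, by omega⟩ : ℕ) :=
      fwdPhi_mono U v hv p _ (by simp; omega) (hblk.sub (le_refl _) (by simp; omega))
    have hm2 : (fwdPhi α v ⟨s, hlt⟩ : ℕ) ≤ (fwdPhi α v q : ℕ) :=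
      fwdPhi_mono U v hv _ q (by simp; omega) (hblk.sub (by simp; omega) (le_refl _))
    have hadj : v ⟨s - 1, by omega⟩ < v ⟨s, hlt⟩ := by
      apply hv _ _ (by rw [Fin.lt_def]; simp; omega)
      exact hblk.sub (by simp; omega) (by simp; omega)
    have hm3 : (fwdPhi α v ⟨s - 1, by omega⟩ : ℕ) ≤ (fwdPhi α v ⟨s, hlt⟩ : ℕ) :=
      index_mono α (le_of_lt hadj)
    have hne : fwdPhi α v ⟨s, hlt⟩ ≠ fwdPhi α v ⟨s - 1, by omega⟩ := hjump
    have hne' : (fwdPhi α v ⟨s - 1, by omega⟩ : ℕ) ≠ (fwdPhi α v ⟨s, hlt⟩ : ℕ) := by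
      intro hval
      exact hne (Fin.val_injective hval.symm)
    rw [Fin.lt_def]
    omega

lemma fwd_valid (U : Finset ℕ) (v : Equiv.Perm (Fin n)) (hv : IncS U v) :
    ValidPair α U (fwdT α U v, fwdPhi α v) :=
  ⟨subset_fwdT U v, fwdPhi_const U v, fwdPhi_strict U v hv, fwdPhi_fibers v⟩

lemma fwd_incS (U : Finset ℕ) (u v : Equiv.Perm (Fin n)) (hu : IncS (gapsInv α) u)
    (hv : IncS U v) : IncS (fwdT α U v) (u * v) := by
  intro p q hpq hblk
  have hphi : fwdPhi α v p = fwdPhi α v q := fwdPhi_const U v p q (le_of_lt hpq) hblk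
  have hvpq : v p < v q := hv p q hpq (hblk.mono (subset_fwdT U v))
  have : u (v p) < u (v q) :=
    hu _ _ hvpq ((sameB_gapsInv_iff α (le_of_lt hvpq)).mpr hphi)
  simpa [Equiv.Perm.mul_apply] using this

/-! backward direction -/

lemma bwd_index (U : Finset ℕ) (T : Finset ℕ) (φ : Fin n → Fin α.length)
    (w : Equiv.Perm (Fin n))
    (hφ : ∀ j, (univ.filter fun p => φ p = j).card = α.blocksFun j) (p : Fin n) :
    α.index (((uCon α φ w hφ)⁻¹ * w) p) = φ p := by
  have hwp : w p ∈ Wset α φ w (φ p) := by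
    apply Finset.mem_image_of_mem
    rw [Finset.mem_filter]
    exact ⟨Finset.mem_univ _, rfl⟩
  have : ((uCon α φ w hφ)⁻¹ * w) p = (uCon α φ w hφ).symm (w p) := rfl
  rw [this]
  exact uCon_symm_index hφ hwp

lemma bwd_incS (U T : Finset ℕ) (φ : Fin n → Fin α.length) (w : Equiv.Perm (Fin n))
    (hval : ValidPair α U (T, φ)) (hw : IncS T w) :
    IncS U ((uCon α φ w hval.2.2.2)⁻¹ * w) := by
  set hφ := hval.2.2.2
  intro p q hpq hblk
  by_cases hbT : SameB T p q
  · have hphi : φ p = φ q := hval.2.1 p q (le_of_lt hpq) hbT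
    have hwpq : w p < w q := hw p q hpq hbT
    have hwp : w p ∈ Wset α φ w (φ q) := by
      apply Finset.mem_image_of_mem
      rw [Finset.mem_filter]
      exact ⟨Finset.mem_univ _, hphi⟩
    have hwq : w q ∈ Wset α φ w (φ q) := by
      apply Finset.mem_image_of_mem
      rw [Finset.mem_filter]
      exact ⟨Finset.mem_univ _, rfl⟩
    exact uCon_symm_mono hφ hwp hwq hwpq
  · have hphi : φ p < φ q := hval.2.2.1 p q hpq hblk hbT
    apply lt_of_index_lt α
    rw [bwd_index U T φ w hφ p, bwd_index U T φ w hφ q]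
    exact hphi

lemma bwd_fwdT (U T : Finset ℕ) (hT : T ⊆ Finset.Ico 1 n) (φ : Fin n → Fin α.length)
    (w : Equiv.Perm (Fin n)) (hval : ValidPair α U (T, φ)) (hw : IncS T w) :
    fwdT α U ((uCon α φ w hval.2.2.2)⁻¹ * w) = T := by
  set hφ := hval.2.2.2
  set v := (uCon α φ w hval.2.2.2)⁻¹ * w with hvdef
  have hphi : ∀ p, fwdPhi α v p = φ p := fun p => bwd_index U T φ w hφ p
  ext s
  rw [fwdT, Finset.mem_union, Finset.mem_filter, Finset.mem_Ico]
  constructor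
  · rintro (h | ⟨⟨h1, h2⟩, hlt, hjump⟩)
    · exact hval.1 h
    · by_contra hsT
      have hblk : SameB T ⟨s - 1, by omega⟩ ⟨s, hlt⟩ := sameB_adj h1 hlt hsT
      have h4 : φ ⟨s - 1, by omega⟩ = φ ⟨s, hlt⟩ :=
        hval.2.1 ⟨s - 1, by omega⟩ ⟨s, hlt⟩ (by simp) hblk
      rw [← hphi, ← hphi] at h4
      exact hjump h4.symm
  · intro hsT
    have hIco := Finset.mem_Ico.mp (hT hsT)
    by_cases hsU : s ∈ U
    · exact Or.inl hsU
    · right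
      refine ⟨⟨hIco.1, hIco.2⟩, hIco.2, ?_⟩
      have hblkU : SameB U ⟨s - 1, by omega⟩ ⟨s, hIco.2⟩ := sameB_adj hIco.1 hIco.2 hsU
      have hnT : ¬ SameB T ⟨s - 1, by omega⟩ ⟨s, hIco.2⟩ := not_sameB_self hIco.1 hIco.2 hsT
      have hstrict : φ ⟨s - 1, by omega⟩ < φ ⟨s, hIco.2⟩ :=
        hval.2.2.1 ⟨s - 1, by omega⟩ ⟨s, hIco.2⟩ (by rw [Fin.mk_lt_mk]; omega) hblkU hnT
      rw [← hphi, ← hphi] at hstrict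
      exact (ne_of_lt hstrict).symm

/-- image description of the `Wset` of a product. -/
lemma Wset_fwd (u v : Equiv.Perm (Fin n)) (j : Fin α.length) :
    Wset α (fwdPhi α v) (u * v) j = (univ.filter fun y : Fin n => α.index y = j).image u := by
  ext z
  rw [Wset]
  simp only [Finset.mem_image, mem_filter, mem_univ, true_and]
  constructor
  · rintro ⟨p, hp, rfl⟩
    exact ⟨v p, hp, rfl⟩
  · rintro ⟨y, hy, rfl⟩
    refine ⟨v.symm y, ?_, ?_⟩
    · show α.index (v (v.symm y)) = j
      rwa [v.apply_symm_apply]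
    · show u (v (v.symm y)) = u y
      rw [v.apply_symm_apply]

lemma fwd_injective (U : Finset ℕ) (u v u' v' : Equiv.Perm (Fin n))
    (hu : IncS (gapsInv α) u) (hu' : IncS (gapsInv α) u')
    (hphi : fwdPhi α v = fwdPhi α v') (hw : u * v = u' * v') : u = u' ∧ v = v' := by
  have him : ∀ j, (univ.filter fun y : Fin n => α.index y = j).image u
      = (univ.filter fun y : Fin n => α.index y = j).image u' := by
    intro j
    rw [← Wset_fwd u v j, ← Wset_fwd u' v' j, hphi, hw]
  have huu : u = u' := u_determined u u' hu hu' him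
  refine ⟨huu, ?_⟩
  have := hw
  rw [huu] at this
  exact mul_left_cancel this

end Expand

section MainProof

open Finset

variable {n : ℕ}

lemma nvalT_lt_of_valid {α : Composition n} {U : Finset ℕ}
    {x : Finset ℕ × (Fin n → Fin α.length)}
    (hval : ValidPair α U x) (hx1 : x.1 ⊆ Finset.Ico 1 n) (hne : x.1 ≠ U) :
    nvalT α U < nvalT α x.1 := by
  apply Finset.card_lt_card
  have hsub : phiSet α U ⊆ phiSet α x.1 := by
    intro φ hφ
    rw [phiSet, mem_filter] at hφ ⊢
    exact ⟨mem_univ _, fun p q hpq hs => hφ.2.1 p q hpq (hs.mono hval.1), hφ.2.2⟩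
  rw [Finset.ssubset_iff_of_subset hsub]
  refine ⟨x.2, ?_, ?_⟩
  · rw [phiSet, mem_filter]
    exact ⟨mem_univ _, hval.2.1, hval.2.2.2⟩
  · intro hmem
    rw [phiSet, mem_filter] at hmem
    obtain ⟨s, hsx, hsU⟩ := Finset.exists_of_ssubset (lt_of_le_of_ne hval.1 (Ne.symm hne))
    have hIco := Finset.mem_Ico.mp (hx1 hsx)
    have heq : x.2 ⟨s - 1, by omega⟩ = x.2 ⟨s, hIco.2⟩ :=
      hmem.2.1 _ _ (by simp) (sameB_adj hIco.1 hIco.2 hsU)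
    have hlt : x.2 ⟨s - 1, by omega⟩ < x.2 ⟨s, hIco.2⟩ :=
      hval.2.2.1 _ _ (by rw [Fin.mk_lt_mk]; omega) (sameB_adj hIco.1 hIco.2 hsU)
        (not_sameB_self hIco.1 hIco.2 hsx)
    exact absurd heq (ne_of_lt hlt)

lemma BElt_mul_expand (k : Type*) [CommRing k] (α : Composition n) (U : Finset ℕ)
    (hU : U ⊆ Finset.Ico 1 n) :
    ∃ L : Multiset (Finset ℕ),
      (∀ T ∈ L, T ⊆ Finset.Ico 1 n ∧ nvalT α U < nvalT α T) ∧
      BComp k α * BElt k n U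
        = nvalT α U • BElt k n U + (L.map (BElt k n)).sum := by
  classical
  set Idx : Finset (Finset ℕ × (Fin n → Fin α.length)) :=
    ((Finset.Ico 1 n).powerset ×ˢ (univ : Finset (Fin n → Fin α.length))).filter
      (fun x => ValidPair α U x) with hIdxDef
  have main : BComp k α * BElt k n U = ∑ x ∈ Idx, BElt k n x.1 := by
    rw [BComp, BElt, BElt, Finset.sum_mul_sum]
    have hbig : ∑ u ∈ univ.filter (fun w : Equiv.Perm (Fin n) => Des w ⊆ gapsInv α),
          ∑ v ∈ univ.filter (fun w : Equiv.Perm (Fin n) => Des w ⊆ U),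
            (MonoidAlgebra.of k (Equiv.Perm (Fin n)) u) * (MonoidAlgebra.of k _ v)
        = ∑ y ∈ Idx.sigma (fun x => univ.filter
              (fun w : Equiv.Perm (Fin n) => Des w ⊆ x.1)),
            MonoidAlgebra.of k (Equiv.Perm (Fin n)) y.2 := by
      rw [← Finset.sum_product']
      refine Finset.sum_bij
        (fun uv _ => (⟨(fwdT α U uv.2, fwdPhi α uv.2), uv.1 * uv.2⟩ :
          Σ _ : Finset ℕ × (Fin n → Fin α.length), Equiv.Perm (Fin n)))
        ?_ ?_ ?_ ?_
      · -- membership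
        rintro ⟨u, v⟩ huv
        rw [Finset.mem_product, Finset.mem_filter, Finset.mem_filter] at huv
        have hu : IncS (gapsInv α) u := des_subset_iff_incS.mp huv.1.2
        have hv : IncS U v := des_subset_iff_incS.mp huv.2.2
        rw [Finset.mem_sigma]
        constructor
        · rw [hIdxDef, Finset.mem_filter, Finset.mem_product]
          exact ⟨⟨Finset.mem_powerset.mpr (fwdT_subset U hU v), mem_univ _⟩, fwd_valid U v hv⟩
        · rw [Finset.mem_filter]
          exact ⟨mem_univ _, des_subset_iff_incS.mpr (fwd_incS U u v hu hv)⟩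
      · -- injectivity
        rintro ⟨u, v⟩ huv ⟨u', v'⟩ huv' heq
        rw [Finset.mem_product, Finset.mem_filter, Finset.mem_filter] at huv huv'
        have hu : IncS (gapsInv α) u := des_subset_iff_incS.mp huv.1.2
        have hu' : IncS (gapsInv α) u' := des_subset_iff_incS.mp huv'.1.2
        have heq' : (⟨(fwdT α U v, fwdPhi α v), u * v⟩ :
            Σ _ : Finset ℕ × (Fin n → Fin α.length), Equiv.Perm (Fin n))
            = ⟨(fwdT α U v', fwdPhi α v'), u' * v'⟩ := heq
        have h2 : u * v = u' * v' :=
          congrArg (fun y : (Σ _ : Finset ℕ × (Fin n → Fin α.length),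
            Equiv.Perm (Fin n)) => y.snd) heq'
        have hphi : fwdPhi α v = fwdPhi α v' :=
          congrArg (fun y : (Σ _ : Finset ℕ × (Fin n → Fin α.length),
            Equiv.Perm (Fin n)) => y.fst.2) heq'
        obtain ⟨huu, hvv⟩ := fwd_injective U u v u' v' hu hu' hphi h2
        rw [Prod.mk.injEq]
        exact ⟨huu, hvv⟩
      · -- surjectivity
        rintro ⟨⟨T, φ⟩, w⟩ hy
        rw [Finset.mem_sigma] at hy
        obtain ⟨hyIdx, hyw⟩ := hy
        rw [Finset.mem_filter] at hyw
        have hwT : Des w ⊆ T := hyw.2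
        rw [hIdxDef, Finset.mem_filter, Finset.mem_product] at hyIdx
        obtain ⟨⟨hTpow, -⟩, hval⟩ := hyIdx
        have hT : T ⊆ Finset.Ico 1 n := Finset.mem_powerset.mp hTpow
        have hw : IncS T w := des_subset_iff_incS.mp hwT
        refine ⟨(uCon α φ w hval.2.2.2, (uCon α φ w hval.2.2.2)⁻¹ * w), ?_, ?_⟩
        · rw [Finset.mem_product, Finset.mem_filter, Finset.mem_filter]
          exact ⟨⟨mem_univ _, des_subset_iff_incS.mpr (uCon_incS hval.2.2.2)⟩,
            ⟨mem_univ _, des_subset_iff_incS.mpr (bwd_incS U T φ w hval hw)⟩⟩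
        · have hT' : fwdT α U ((uCon α φ w hval.2.2.2)⁻¹ * w) = T := bwd_fwdT U T hT φ w hval hw
          have hphi : fwdPhi α ((uCon α φ w hval.2.2.2)⁻¹ * w) = φ :=
            funext fun p => bwd_index U T φ w hval.2.2.2 p
          have hww : uCon α φ w hval.2.2.2 * ((uCon α φ w hval.2.2.2)⁻¹ * w) = w :=
            mul_inv_cancel_left _ _
          apply Sigma.ext
          · exact Prod.ext hT' hphi
          · exact heq_of_eq hww
      · -- values
        rintro ⟨u, v⟩ huv
        exact (map_mul (MonoidAlgebra.of k (Equiv.Perm (Fin n))) u v).symm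
    rw [hbig, Finset.sum_sigma]
    rfl
  have hcardU : (Idx.filter fun x => x.1 = U).card = nvalT α U := by
    rw [nvalT]
    apply Finset.card_bij' (i := fun x _ => x.2) (j := fun φ _ => (U, φ))
    · intro x hx
      rw [Finset.mem_filter] at hx
      obtain ⟨hxIdx, hxU⟩ := hx
      rw [hIdxDef, Finset.mem_filter] at hxIdx
      have hval := hxIdx.2
      simp only [phiSet, Finset.mem_filter, Finset.mem_univ, true_and]
      refine ⟨?_, hval.2.2.2⟩
      intro p q hpq hsb
      exact hval.2.1 p q hpq (by rwa [hxU])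
    · intro x hx
      have hxU : x.1 = U := by
        first
        | exact hx.2
        | exact (Finset.mem_filter.mp hx).2
      exact Prod.ext hxU.symm rfl
    · intro φ hφ
      rfl
    · intro φ hφ
      simp only [phiSet, Finset.mem_filter, Finset.mem_univ, true_and] at hφ
      rw [Finset.mem_filter]
      constructor
      · rw [hIdxDef, Finset.mem_filter, Finset.mem_product]
        refine ⟨⟨Finset.mem_powerset.mpr hU, mem_univ _⟩,
          Finset.Subset.refl U, hφ.1, ?_, hφ.2⟩
        intro p q hpq hsb hnsb
        exact absurd hsb hnsb
      · rfl
  refine ⟨(Idx.filter fun x => ¬ x.1 = U).val.map Prod.fst, ?_, ?_⟩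
  · intro T hT
    rw [Multiset.mem_map] at hT
    obtain ⟨x, hx, rfl⟩ := hT
    have hx2 : x ∈ Idx.filter fun x => ¬ x.1 = U := hx
    rw [Finset.mem_filter] at hx2
    obtain ⟨hxIdx, hxne⟩ := hx2
    rw [hIdxDef, Finset.mem_filter, Finset.mem_product] at hxIdx
    exact ⟨Finset.mem_powerset.mp hxIdx.1.1,
      nvalT_lt_of_valid hxIdx.2 (Finset.mem_powerset.mp hxIdx.1.1) hxne⟩
  · rw [main, ← Finset.sum_filter_add_sum_filter_not Idx (fun x => x.1 = U)]
    have hconst : ∑ x ∈ Idx.filter (fun x => x.1 = U), BElt k n x.1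
        = ∑ _x ∈ Idx.filter (fun x => x.1 = U), BElt k n U :=
      Finset.sum_congr rfl (fun x hx => by rw [(Finset.mem_filter.mp hx).2])
    rw [hconst, Finset.sum_const, hcardU]
    congr 1
    rw [Multiset.map_map]
    rfl

lemma BElt_empty (k : Type*) [CommRing k] : BElt k n (∅ : Finset ℕ) = 1 := by
  classical
  have hset : (univ.filter fun w : Equiv.Perm (Fin n) => Des w ⊆ (∅ : Finset ℕ)) = {1} := by
    ext w
    rw [Finset.mem_filter, Finset.mem_singleton]
    constructor
    · rintro ⟨-, hdes⟩
      have hinc : IncS (∅ : Finset ℕ) w := des_subset_iff_incS.mp hdes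
      have hsm : StrictMono ⇑w := by
        intro p q h
        exact hinc p q h (fun s hs => absurd hs (Finset.notMem_empty s))
      have hcard : (univ : Finset (Fin n)).card = n := by simp
      have h1 : ⇑w = ⇑((univ : Finset (Fin n)).orderEmbOfFin hcard) :=
        Finset.orderEmbOfFin_unique hcard (fun x => mem_univ _) hsm
      have h2 : ⇑(1 : Equiv.Perm (Fin n)) = ⇑((univ : Finset (Fin n)).orderEmbOfFin hcard) :=
        Finset.orderEmbOfFin_unique hcard (fun x => mem_univ _) (fun p q h => h)
      apply Equiv.coe_fn_injective
      exact h1.trans h2.symm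
    · rintro rfl
      refine ⟨mem_univ _, des_subset_iff_incS.mpr ?_⟩
      intro p q h _
      simpa using h
  rw [BElt, hset, Finset.sum_singleton, map_one]

lemma key_induction (k : Type*) [CommRing k] (α : Composition n) (S : Finset ℕ)
    (hS : ∀ T : Finset ℕ, T ⊆ Finset.Ico 1 n → nvalT α T ∈ S) :
    ∀ N : ℕ, ∀ U : Finset ℕ, U ⊆ Finset.Ico 1 n →
      (S.filter fun j => nvalT α U ≤ j).card = N →
      (Polynomial.aeval (BComp k α))
          (∏ j ∈ S.filter fun j => nvalT α U ≤ j, (Polynomial.X - Polynomial.C ((j : ℕ) : k)))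
        * BElt k n U = 0 := by
  intro N
  induction N using Nat.strong_induction_on with
  | _ N ih =>
    intro U hU hcard
    have hvmem : nvalT α U ∈ S.filter fun j => nvalT α U ≤ j :=
      Finset.mem_filter.mpr ⟨hS U hU, le_refl _⟩
    obtain ⟨L, hL, hexp⟩ := BElt_mul_expand k α U hU
    rw [← Finset.prod_erase_mul _ _ hvmem, map_mul, mul_assoc]
    have hstep : (Polynomial.aeval (BComp k α))
        (Polynomial.X - Polynomial.C ((nvalT α U : ℕ) : k)) * BElt k n U
        = (L.map (BElt k n)).sum := by
      rw [map_sub, Polynomial.aeval_X, Polynomial.aeval_C, sub_mul, hexp]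
      have hsm : (algebraMap k (MonoidAlgebra k (Equiv.Perm (Fin n)))) ((nvalT α U : ℕ) : k)
          * BElt k n U = nvalT α U • BElt k n U := by
        rw [← Algebra.smul_def, Nat.cast_smul_eq_nsmul]
      rw [hsm, add_sub_cancel_left]
    rw [hstep, ← Multiset.sum_map_mul_left]
    apply Multiset.sum_eq_zero
    intro z hz
    rw [Multiset.mem_map] at hz
    obtain ⟨T', hT', rfl⟩ := hz
    obtain ⟨hT'Ico, hT'lt⟩ := hL T' hT'
    set Tset := S.filter fun j => nvalT α T' ≤ j with hTset
    have hsub : Tset ⊆ (S.filter fun j => nvalT α U ≤ j).erase (nvalT α U) := by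
      intro j hj
      rw [hTset, Finset.mem_filter] at hj
      rw [Finset.mem_erase, Finset.mem_filter]
      refine ⟨?_, hj.1, by omega⟩
      omega
    rw [← Finset.prod_sdiff hsub, map_mul, mul_assoc]
    have hzero := ih Tset.card ?_ T' hT'Ico rfl
    · rw [hzero, mul_zero]
    · have h1 : Tset.card ≤ ((S.filter fun j => nvalT α U ≤ j).erase (nvalT α U)).card :=
        Finset.card_le_card hsub
      have h2 := Finset.card_erase_of_mem hvmem
      have h3 : 0 < (S.filter fun j => nvalT α U ≤ j).card := Finset.card_pos.mpr ⟨_, hvmem⟩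
      omega

end MainProof

/-- Let `k` be a commutative ring and `α` a composition of `n`.  Then
`∏_{j ∈ n_α(CF)} (B_α - j·1) = 0` in `k[S_n]`, the product ranging over the distinct
elements `j` of the finite set `n_α(CF)` of knapsack numbers (encoded here as: for any
finite set `S` of natural numbers whose members are exactly the knapsack numbers
`n_α(F)` for `F ∈ CF`, the polynomial `∏_{j ∈ S} (x - j)` annihilates `B_α`). -/
theorem BComp_annihilated_by_knapsack_poly (k : Type*) [CommRing k] (n : ℕ)
    (α : Composition n) (S : Finset ℕ)
    (hS : ∀ j : ℕ, j ∈ S ↔ ∃ F : SetComp n, knap α F = j) :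
    Polynomial.aeval (BComp k α) (∏ j ∈ S, (Polynomial.X - Polynomial.C ((j : ℕ) : k))) = 0 := by
  classical
  have hS' : ∀ T : Finset ℕ, T ⊆ Finset.Ico 1 n → nvalT α T ∈ S := by
    intro T hT
    rw [hS]
    exact ⟨faceOf (compOfBreaks T), knap_eq_nvalT α hT⟩
  have h0 : (∅ : Finset ℕ) ⊆ Finset.Ico 1 n := Finset.empty_subset _
  have hkey := key_induction k α S hS'
    (S.filter fun j => nvalT α (∅ : Finset ℕ) ≤ j).card ∅ h0 rfl
  have hsub : (S.filter fun j => nvalT α (∅ : Finset ℕ) ≤ j) ⊆ S := Finset.filter_subset _ _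
  have hsplit := Finset.prod_sdiff (f := fun j => Polynomial.X - Polynomial.C ((j : ℕ) : k)) hsub
  calc (Polynomial.aeval (BComp k α))
        (∏ j ∈ S, (Polynomial.X - Polynomial.C ((j : ℕ) : k)))
      = (Polynomial.aeval (BComp k α))
          (∏ j ∈ S, (Polynomial.X - Polynomial.C ((j : ℕ) : k))) * BElt k n ∅ := by
        rw [BElt_empty, mul_one]
    _ = (Polynomial.aeval (BComp k α))
          (∏ j ∈ S \ (S.filter fun j => nvalT α (∅ : Finset ℕ) ≤ j),
            (Polynomial.X - Polynomial.C ((j : ℕ) : k))) *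
        ((Polynomial.aeval (BComp k α))
          (∏ j ∈ S.filter fun j => nvalT α (∅ : Finset ℕ) ≤ j,
            (Polynomial.X - Polynomial.C ((j : ℕ) : k))) * BElt k n ∅) := by
        rw [← hsplit, map_mul, mul_assoc]
    _ = 0 := by rw [hkey, mul_zero]

end CardShuffle
end
end

section
/- Let α be a composition of n and let F, G be set compositions of [n]. Then: (a) if F ⊑ G then n_α(F) ≥ n_α(G); (b) n_α(FG) ≥ n_α(F) and n_α(FG) ≥ n_α(G); (c) if type G = α and F is not contained in G, then n_α(FG) > n_α(F); (d) n_α(F) = n_{rev α}(F). -/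
open scoped Classical

noncomputable section

namespace CardShuffle

namespace SetComp

variable {n : ℕ}

theorem ext'_s15 {F G : SetComp n} (h : F.blocks = G.blocks) : F = G := by
  cases F; cases G; simpa using h

theorem len_le (F : SetComp n) : F.len ≤ n := by
  classical
  have key : ∀ i : Fin F.len,
      (F.nonempty (F.blocks[i.1]'i.2) (List.getElem_mem i.2)).choose ∈ F.blocks[i.1]'i.2 :=
    fun i => (F.nonempty _ (List.getElem_mem i.2)).choose_spec
  have hinj : Function.Injective (fun i : Fin F.len =>
      (F.nonempty (F.blocks[i.1]'i.2) (List.getElem_mem i.2)).choose) := by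
    intro i j hij
    simp only at hij
    by_contra hne
    rcases lt_or_gt_of_ne (fun h => hne (Fin.ext h)) with h | h
    · have d := List.pairwise_iff_getElem.mp F.pairwiseDisjoint i.1 j.1 i.2 j.2 h
      exact Finset.disjoint_left.mp d (key i) (hij ▸ key j)
    · have d := List.pairwise_iff_getElem.mp F.pairwiseDisjoint j.1 i.1 j.2 i.2 h
      exact Finset.disjoint_left.mp d (key j) (hij ▸ key i)
  simpa using Fintype.card_le_of_injective _ hinj

instance : Finite (SetComp n) := by
  have hfin : Finite {l : List (Finset (Fin n)) // l.length ≤ n} :=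
    (List.finite_length_le (Finset (Fin n)) n).to_subtype
  exact Finite.of_injective
    (fun F : SetComp n => (⟨F.blocks, F.len_le⟩ : {l : List (Finset (Fin n)) // l.length ≤ n}))
    (fun F G h => ext'_s15 (congrArg Subtype.val h))

theorem le_trans' {F G H : SetComp n} (h1 : F.le G) (h2 : G.le H) : F.le H := by
  intro B hB
  obtain ⟨C, hC, hBC⟩ := h1 B hB
  obtain ⟨D, hD, hCD⟩ := h2 C hC
  exact ⟨D, hD, hBC.trans hCD⟩

theorem mem_mul {F G : SetComp n} {S : Finset (Fin n)} (h : S ∈ (F.mul G).blocks) :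
    ∃ B ∈ F.blocks, ∃ C ∈ G.blocks, S = B ∩ C := by
  simp only [mul, List.mem_filter, List.mem_flatten, List.mem_map] at h
  obtain ⟨⟨l, ⟨B, hB, rfl⟩, hS⟩, -⟩ := h
  obtain ⟨C, hC, rfl⟩ := List.mem_map.mp hS
  exact ⟨B, hB, C, hC, rfl⟩

theorem mul_le_left (F G : SetComp n) : (F.mul G).le F := by
  intro S hS
  obtain ⟨B, hB, C, hC, rfl⟩ := mem_mul hS
  exact ⟨B, hB, Finset.inter_subset_left⟩

theorem mul_le_right (F G : SetComp n) : (F.mul G).le G := by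
  intro S hS
  obtain ⟨B, hB, C, hC, rfl⟩ := mem_mul hS
  exact ⟨C, hC, Finset.inter_subset_right⟩

/-- The reverse of a set composition. -/
def rev (F : SetComp n) : SetComp n where
  blocks := F.blocks.reverse
  nonempty := fun B hB => F.nonempty B (List.mem_reverse.mp hB)
  pairwiseDisjoint := List.pairwise_reverse.mpr
    (F.pairwiseDisjoint.imp fun h => Disjoint.symm h)
  cover := fun x => by
    obtain ⟨B, hB, hx⟩ := F.cover x
    exact ⟨B, List.mem_reverse.mpr hB, hx⟩

theorem rev_rev (F : SetComp n) : F.rev.rev = F := ext'_s15 (List.reverse_reverse _)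

theorem typeList_rev (F : SetComp n) : F.rev.typeList = F.typeList.reverse := by
  simp [typeList, rev]

theorem le_rev_iff {F G : SetComp n} : F.le G.rev ↔ F.le G := by
  simp [le, rev, List.mem_reverse]

end SetComp

theorem knap_eq_ncard {n : ℕ} (α : Composition n) (F : SetComp n) :
    knap α F = {G : SetComp n | F.le G ∧ G.typeList = α.blocks}.ncard :=
  Nat.card_coe_set_eq _

theorem knap_le_of_le {n : ℕ} (α : Composition n) {F G : SetComp n} (h : F.le G) :
    knap α G ≤ knap α F := by
  rw [knap_eq_ncard, knap_eq_ncard]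
  refine Set.ncard_le_ncard ?_ (Set.toFinite _)
  rintro H ⟨h1, h2⟩
  exact ⟨SetComp.le_trans' h h1, h2⟩

/-- Let `α` be a composition of `n` and `F, G` set compositions of
`[n]`.  Then: (a) if `F ⊑ G` then `n_α(F) ≥ n_α(G)`; (b) `n_α(FG) ≥ n_α(F)` and
`n_α(FG) ≥ n_α(G)`; (c) if `type G = α` and `F` is not contained in `G`, then
`n_α(FG) > n_α(F)`; (d) `n_α(F) = n_{rev α}(F)`. -/
theorem knapsack_inequalities (n : ℕ) (α : Composition n) (F G : SetComp n) :
    (F.le G → knap α G ≤ knap α F) ∧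
    (knap α F ≤ knap α (F.mul G) ∧ knap α G ≤ knap α (F.mul G)) ∧
    (G.typeList = α.blocks → ¬ F.le G → knap α F < knap α (F.mul G)) ∧
    (knap α F = knap (revComp α) F) := by
  refine ⟨fun h => knap_le_of_le α h, ⟨knap_le_of_le α (SetComp.mul_le_left F G),
    knap_le_of_le α (SetComp.mul_le_right F G)⟩, ?_, ?_⟩
  · intro hG hFG
    rw [knap_eq_ncard, knap_eq_ncard]
    refine Set.ncard_lt_ncard ?_ (Set.toFinite _)
    constructor
    · rintro H ⟨h1, h2⟩
      exact ⟨SetComp.le_trans' (SetComp.mul_le_left F G) h1, h2⟩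
    · intro hsub
      have hGmem : G ∈ {H : SetComp n | F.le H ∧ H.typeList = α.blocks} :=
        hsub ⟨SetComp.mul_le_right F G, hG⟩
      exact hFG hGmem.1
  · apply Nat.card_congr
    refine ⟨fun G => ⟨G.1.rev, ?_, ?_⟩, fun G => ⟨G.1.rev, ?_, ?_⟩, ?_, ?_⟩
    · exact SetComp.le_rev_iff.mpr G.2.1
    · show G.1.rev.typeList = (revComp α).blocks
      rw [SetComp.typeList_rev, G.2.2]; rfl
    · exact SetComp.le_rev_iff.mpr G.2.1
    · show G.1.rev.typeList = α.blocks
      rw [SetComp.typeList_rev, G.2.2]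
      show (α.blocks.reverse).reverse = α.blocks
      exact List.reverse_reverse _
    · intro G; exact Subtype.ext (SetComp.rev_rev _)
    · intro G; exact Subtype.ext (SetComp.rev_rev _)

end CardShuffle
end
end
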